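/- arXiv:1105.2355 — 3 statements merged into one kernel-verified Lean document; each statement's English description precedes it below -/
import Mathlib

section
/- Let f be a real polynomial of degree n with nonzero leading coefficient and discriminant sequence [D_1(f),…,D_n(f)]. If for some 0 ≤ j ≤ n the last j members of the discriminant sequence vanish, i.e. D_{n−j+1}(f) = ⋯ = D_n(f) = 0, then f has at most n − j distinct roots in ℂ. -/
open Polynomial

/-- Entry `(r, c)` (0-indexed) of the discrimination matrix of a real polynomial `f`
regarded as having degree `n`.  Even rows `2*i` carry the coefficient vector
`(a₀, a₁, …, aₙ)` of `f` (where `aₘ = f.coeff (n - m)`) shifted `i` columns to the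
right; odd rows `2*i+1` carry the coefficient vector `(n·a₀, (n-1)·a₁, …, a_{n-1})`
of the derivative `f'` preceded by one zero and shifted `i` columns to the right. -/
def discEntry (n : ℕ) (f : Polynomial ℝ) (r c : ℕ) : ℝ :=
  if r % 2 = 0 then
    if r / 2 ≤ c ∧ c ≤ r / 2 + n then f.coeff (n - (c - r / 2)) else 0
  else
    if r / 2 + 1 ≤ c ∧ c ≤ r / 2 + n then
      ((n - (c - (r / 2 + 1)) : ℕ) : ℝ) * f.coeff (n - (c - (r / 2 + 1)))
    else 0

/-- The `k`-th discriminant `D_k(f)`: the determinant of the submatrix of the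
discrimination matrix formed by its first `2k` rows and first `2k` columns. -/
def discSeq (n : ℕ) (f : Polynomial ℝ) (k : ℕ) : ℝ :=
  Matrix.det (Matrix.of fun i j : Fin (2 * k) => discEntry n f i j)

private lemma sum_range_two_mul (k : ℕ) (F : ℕ → ℝ) :
    ∑ r ∈ Finset.range (2 * k), F r = ∑ i ∈ Finset.range k, (F (2 * i) + F (2 * i + 1)) := by
  induction k with
  | zero => simp
  | succ k ih =>
    have h : 2 * (k + 1) = (2 * k + 1) + 1 := by ring
    rw [h, Finset.sum_range_succ, Finset.sum_range_succ, ih, Finset.sum_range_succ]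
    ring

/-- The key nondegeneracy lemma: if the gcd of `f` and `f'` has degree `n - k`,
then the `k`-th discriminant does not vanish. -/
private lemma discSeq_ne_zero (n : ℕ) (f : Polynomial ℝ) (hf : f ≠ 0)
    (hdeg : f.natDegree = n) (hd : derivative f ≠ 0) (k : ℕ) (hk1 : 1 ≤ k) (hkn : k ≤ n)
    (he : (GCDMonoid.gcd f (derivative f)).natDegree = n - k) :
    discSeq n f k ≠ 0 := by
  intro hdet
  rw [discSeq] at hdet
  obtain ⟨v, hv0, hv⟩ := Matrix.exists_vecMul_eq_zero_iff.mpr hdet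
  set v' : ℕ → ℝ := fun t => if h : t < 2 * k then v ⟨t, h⟩ else 0 with hv'
  set U : Polynomial ℝ := ∑ i ∈ Finset.range k, C (v' (2 * i)) * X ^ (k - 1 - i) with hU
  set W : Polynomial ℝ := ∑ i ∈ Finset.range k, C (v' (2 * i + 1)) * X ^ (k - 1 - i) with hW
  set p : Polynomial ℝ := ∑ i ∈ Finset.range k,
      (C (v' (2 * i)) * (f * X ^ (k - 1 - i)) +
        C (v' (2 * i + 1)) * (derivative f * X ^ (k - 1 - i))) with hp
  have hveq : ∀ r : Fin (2 * k), v' r.val = v r := by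
    intro r
    rw [hv']
    simp only
    rw [dif_pos r.isLt]
  -- each column of the vecMul relation
  have hcol : ∀ c, c < 2 * k → ∑ r ∈ Finset.range (2 * k), v' r * discEntry n f r c = 0 := by
    intro c hc
    have h1 := congrFun hv ⟨c, hc⟩
    simp only [Matrix.vecMul, dotProduct, Matrix.of_apply, Pi.zero_apply] at h1
    rw [← Fin.sum_univ_eq_sum_range (fun r => v' r * discEntry n f r c) (2 * k)]
    simpa [hveq] using h1
  -- the coefficients of p compute the columns
  have hpc : ∀ c, c < 2 * k →
      p.coeff (n + k - 1 - c) = ∑ r ∈ Finset.range (2 * k), v' r * discEntry n f r c := by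
    intro c hc
    rw [sum_range_two_mul, hp, Polynomial.finset_sum_coeff]
    apply Finset.sum_congr rfl
    intro i hi
    rw [Finset.mem_range] at hi
    rw [Polynomial.coeff_add, Polynomial.coeff_C_mul, Polynomial.coeff_C_mul,
      Polynomial.coeff_mul_X_pow', Polynomial.coeff_mul_X_pow']
    congr 1
    · -- even row
      congr 1
      simp only [discEntry]
      rw [if_pos (by omega : (2 * i) % 2 = 0), (by omega : 2 * i / 2 = i)]
      by_cases hcase : i ≤ c ∧ c ≤ i + n
      · rw [if_pos hcase, if_pos (by omega)]
        congr 1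
        omega
      · rw [if_neg hcase]
        by_cases hcase2 : c < i
        · rw [if_pos (by omega)]
          apply Polynomial.coeff_eq_zero_of_natDegree_lt
          rw [hdeg]; omega
        · rw [if_neg (by omega)]
    · -- odd row
      congr 1
      simp only [discEntry]
      rw [if_neg (by omega : ¬(2 * i + 1) % 2 = 0), (by omega : (2 * i + 1) / 2 = i)]
      by_cases hcase : i + 1 ≤ c ∧ c ≤ i + n
      · rw [if_pos hcase, if_pos (by omega), Polynomial.coeff_derivative]
        have h3 : n + k - 1 - c - (k - 1 - i) + 1 = n - (c - (i + 1)) := by omega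
        have h4 : ((n - (c - (i + 1)) : ℕ) : ℝ) = ((n + k - 1 - c - (k - 1 - i) : ℕ) : ℝ) + 1 := by
          rw [← h3]; push_cast; ring
        rw [h3, h4]
        ring
      · rw [if_neg hcase]
        by_cases hcase2 : c ≤ i
        · rw [if_pos (by omega), Polynomial.coeff_derivative,
            Polynomial.coeff_eq_zero_of_natDegree_lt (by rw [hdeg]; omega)]
          ring
        · rw [if_neg (by omega)]
  -- all the coefficients of p in degrees [n-k, n+k-1] vanish
  have hpc0 : ∀ d, n - k ≤ d → d ≤ n + k - 1 → p.coeff d = 0 := by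
    intro d h1 h2
    have hc : n + k - 1 - d < 2 * k := by omega
    have h3 : p.coeff (n + k - 1 - (n + k - 1 - d)) = 0 := by rw [hpc _ hc, hcol _ hc]
    rwa [(by omega : n + k - 1 - (n + k - 1 - d) = d)] at h3
  have hpdeg : p.natDegree ≤ n + k - 1 := by
    rw [hp]
    apply Polynomial.natDegree_sum_le_of_forall_le
    intro i _
    have hb : ∀ (q : Polynomial ℝ) (a : ℝ) (t : ℕ), q.natDegree + t ≤ n + k - 1 →
        (C a * (q * X ^ t)).natDegree ≤ n + k - 1 := by
      intro q a t ht
      refine (Polynomial.natDegree_C_mul_le _ _).trans (Polynomial.natDegree_mul_le.trans ?_)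
      simpa [Polynomial.natDegree_X_pow] using ht
    refine (Polynomial.natDegree_add_le _ _).trans (max_le (hb _ _ _ (by rw [hdeg]; omega))
      (hb _ _ _ ?_))
    have h5 := Polynomial.natDegree_derivative_le f
    rw [hdeg] at h5
    omega
  have hfU : p = f * U + derivative f * W := by
    rw [hp, hU, hW, Finset.mul_sum, Finset.mul_sum, ← Finset.sum_add_distrib]
    apply Finset.sum_congr rfl
    intro i _
    ring
  set g := GCDMonoid.gcd f (derivative f) with hg
  have hg0 : g ≠ 0 := gcd_ne_zero_of_left hf
  -- p must vanish
  have hpz : p = 0 := by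
    by_contra hp0
    have hgd : g ∣ p := by
      rw [hfU]
      exact dvd_add ((gcd_dvd_left f (derivative f)).mul_right U)
        ((gcd_dvd_right f (derivative f)).mul_right W)
    have h6 : g.natDegree ≤ p.natDegree := Polynomial.natDegree_le_of_dvd hgd hp0
    have h7 : p.coeff p.natDegree ≠ 0 := Polynomial.leadingCoeff_ne_zero.mpr hp0
    by_cases h8 : n - k ≤ p.natDegree
    · exact h7 (hpc0 _ h8 hpdeg)
    · rw [he] at h6; omega
  have h9 : f * U + derivative f * W = 0 := by rw [← hfU]; exact hpz
  have hfg : g * (f / g) = f := EuclideanDomain.mul_div_cancel' hg0 (gcd_dvd_left _ _)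
  have hdg : g * (derivative f / g) = derivative f :=
    EuclideanDomain.mul_div_cancel' hg0 (gcd_dvd_right _ _)
  have hcop : IsCoprime (f / g) (derivative f / g) := isCoprime_div_gcd_div_gcd hd
  have hW0 : W = 0 := by
    by_contra hW0
    have h10 : g * ((f / g) * U + (derivative f / g) * W) = g * 0 := by
      rw [mul_zero, mul_add, ← mul_assoc, ← mul_assoc, hfg, hdg]
      exact h9
    have h11 := mul_left_cancel₀ hg0 h10
    have h12 : (f / g) ∣ (derivative f / g) * W := ⟨-U, by linear_combination h11⟩
    have h13 : (f / g) ∣ W := hcop.dvd_of_dvd_mul_left h12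
    have hfq0 : f / g ≠ 0 := left_div_gcd_ne_zero hf
    have hdq : (f / g).natDegree = k := by
      have h14 := Polynomial.natDegree_mul hg0 hfq0
      rw [hfg, hdeg, he] at h14
      omega
    have hWdeg : W.natDegree ≤ k - 1 := by
      rw [hW]
      apply Polynomial.natDegree_sum_le_of_forall_le
      intro i _
      refine (Polynomial.natDegree_C_mul_le _ _).trans ?_
      rw [Polynomial.natDegree_X_pow]
      omega
    have h15 := Polynomial.natDegree_le_of_dvd h13 hW0
    omega
  have hU0 : U = 0 := by
    have h16 : f * U = 0 := by rw [hW0, mul_zero, add_zero] at h9; exact h9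
    rcases mul_eq_zero.mp h16 with h | h
    · exact absurd h hf
    · exact h
  -- extract that all entries of v vanish
  have keyc : ∀ (Q : Polynomial ℝ) (a : ℕ → ℝ),
      Q = ∑ i ∈ Finset.range k, C (a i) * X ^ (k - 1 - i) → Q = 0 →
      ∀ i, i < k → a i = 0 := by
    intro Q a hQ hQ0 i hik
    have h17 : Q.coeff (k - 1 - i) = a i := by
      rw [hQ, Polynomial.finset_sum_coeff, Finset.sum_eq_single i]
      · simp [Polynomial.coeff_C_mul, Polynomial.coeff_X_pow]
      · intro b hb hbi
        rw [Finset.mem_range] at hb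
        simp only [Polynomial.coeff_C_mul, Polynomial.coeff_X_pow]
        rw [if_neg (by omega), mul_zero]
      · intro hni
        exact absurd (Finset.mem_range.mpr hik) hni
    rw [hQ0] at h17
    simpa using h17.symm
  have hv'0 : ∀ t, t < 2 * k → v' t = 0 := by
    intro t ht
    rcases Nat.even_or_odd t with ⟨i, hti⟩ | ⟨i, hti⟩
    · rw [(by omega : t = 2 * i)]
      exact keyc U _ hU hU0 i (by omega)
    · rw [(by omega : t = 2 * i + 1)]
      exact keyc W _ hW hW0 i (by omega)
  apply hv0
  funext r
  have h18 := hv'0 r.val r.isLt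
  rw [hveq r] at h18
  exact h18

/-- Let `f` be a real polynomial of degree `n` with nonzero leading
coefficient and discriminant sequence `[D₁(f), …, Dₙ(f)]`.  If for some `0 ≤ j ≤ n`
the last `j` members of the discriminant sequence vanish, i.e.
`D_{n-j+1}(f) = ⋯ = Dₙ(f) = 0`, then `f` has at most `n - j` distinct roots in `ℂ`. -/
theorem statement1 (n j : ℕ) (hj : j ≤ n) (f : Polynomial ℝ) (hf : f ≠ 0)
    (hdeg : f.natDegree = n)
    (h : ∀ k, n - j < k → k ≤ n → discSeq n f k = 0) :
    (f.map (algebraMap ℝ ℂ)).roots.toFinset.card ≤ n - j := by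
  by_contra hcon
  push_neg at hcon
  set F := f.map (algebraMap ℝ ℂ) with hF
  set m := F.roots.toFinset.card with hm
  have hF0 : F ≠ 0 := Polynomial.map_ne_zero hf
  have hFdeg : F.natDegree = n := by
    rw [hF, Polynomial.natDegree_map_eq_of_injective (algebraMap ℝ ℂ).injective, hdeg]
  have hcardroots : Multiset.card F.roots = n := by
    rw [(Polynomial.splits_iff_card_roots).mp (IsAlgClosed.splits F), hFdeg]
  have hmn : m ≤ n := by
    rw [hm, ← hcardroots]
    exact Multiset.toFinset_card_le _
  have hm1 : 1 ≤ m := by omega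
  have hn1 : 1 ≤ n := by omega
  have hd : derivative f ≠ 0 := by
    intro h0
    have h1 := Polynomial.natDegree_eq_zero_of_derivative_eq_zero h0
    omega
  have hFd0 : derivative F ≠ 0 := by
    rw [hF, Polynomial.derivative_map]
    exact Polynomial.map_ne_zero hd
  set g := GCDMonoid.gcd f (derivative f) with hg
  have hg0 : g ≠ 0 := gcd_ne_zero_of_left hf
  set G := g.map (algebraMap ℝ ℂ) with hG
  have hG0 : G ≠ 0 := Polynomial.map_ne_zero hg0
  have hGF : G ∣ F := Polynomial.map_dvd _ (gcd_dvd_left f (derivative f))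
  have hGF' : G ∣ derivative F := by
    rw [hF, Polynomial.derivative_map]
    exact Polynomial.map_dvd _ (gcd_dvd_right f (derivative f))
  have hGdeg : G.natDegree = g.natDegree :=
    Polynomial.natDegree_map_eq_of_injective (algebraMap ℝ ℂ).injective g
  have hGroots : Multiset.card G.roots = G.natDegree :=
    (Polynomial.splits_iff_card_roots).mp (IsAlgClosed.splits G)
  have hsub : G.roots.toFinset ⊆ F.roots.toFinset :=
    Multiset.toFinset_subset.mpr (Multiset.subset_of_le (Polynomial.roots.le_of_dvd hF0 hGF))
  have hone : ∀ r ∈ F.roots.toFinset, 1 ≤ F.roots.count r := fun r hr =>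
    Multiset.one_le_count_iff_mem.mpr (Multiset.mem_toFinset.mp hr)
  have hbound : ∀ r ∈ F.roots.toFinset, G.roots.count r + 1 ≤ F.roots.count r := by
    intro r hr
    have hroot : F.IsRoot r := Polynomial.isRoot_of_mem_roots (Multiset.mem_toFinset.mp hr)
    have h1 : G.rootMultiplicity r ≤ (derivative F).rootMultiplicity r :=
      (Polynomial.le_rootMultiplicity_iff hFd0).mpr
        ((Polynomial.pow_rootMultiplicity_dvd G r).trans hGF')
    rw [Polynomial.derivative_rootMultiplicity_of_root hroot] at h1
    have h2 := hone r hr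
    rw [Polynomial.count_roots, Polynomial.count_roots] at *
    omega
  have hkey : Multiset.card G.roots + m ≤ n := by
    calc Multiset.card G.roots + m
        = (∑ r ∈ G.roots.toFinset, G.roots.count r) + m := by
          rw [Multiset.toFinset_sum_count_eq]
      _ ≤ (∑ r ∈ F.roots.toFinset, G.roots.count r) + m := by
          exact Nat.add_le_add_right (Finset.sum_le_sum_of_subset hsub) m
      _ = ∑ r ∈ F.roots.toFinset, (G.roots.count r + 1) := by
          rw [Finset.sum_add_distrib, Finset.sum_const, smul_eq_mul, mul_one, hm]
      _ ≤ ∑ r ∈ F.roots.toFinset, F.roots.count r := Finset.sum_le_sum hbound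
      _ = n := by rw [Multiset.toFinset_sum_count_eq, hcardroots]
  have he2 : g.natDegree ≤ n - m := by
    rw [← hGdeg, ← hGroots]
    omega
  have hne := discSeq_ne_zero n f hf hdeg hd (n - g.natDegree) (by omega) (by omega) (by rw [← hg]; omega)
  exact hne (h (n - g.natDegree) (by omega) (by omega))
end

section
/- Let f be a real polynomial of degree n with nonzero leading coefficient and discriminant sequence [D_1(f),…,D_n(f)]. If f has at most n − j distinct roots in ℂ (for some 0 ≤ j ≤ n), then the last j members of the discriminant sequence vanish: D_{n−j+1}(f) = ⋯ = D_n(f) = 0. -/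
open Polynomial

/-- Splitting a sum over `range (2*k)` into even- and odd-indexed parts. -/
theorem disc_sum_split {M : Type*} [AddCommMonoid M] (k : ℕ) (h : ℕ → M) :
    ∑ i ∈ Finset.range (2 * k), h i
      = ∑ i ∈ Finset.range k, h (2 * i) + ∑ i ∈ Finset.range k, h (2 * i + 1) := by
  induction k with
  | zero => simp
  | succ k ih =>
    rw [Nat.mul_succ, Finset.sum_range_succ, Finset.sum_range_succ, Finset.sum_range_succ,
      Finset.sum_range_succ, ih]
    abel

/-- A sum of shifted coefficient rows equals a coefficient of a product. -/
theorem disc_combo (k : ℕ) (p F : Polynomial ℂ) (hp : p.natDegree < k) (t : ℕ) :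
    ∑ i ∈ Finset.range k, p.coeff (k - 1 - i) * ((X : Polynomial ℂ) ^ (k - 1 - i) * F).coeff t
      = (p * F).coeff t := by
  rw [Finset.sum_range_reflect (fun s => p.coeff s * ((X : Polynomial ℂ) ^ s * F).coeff t) k]
  conv_rhs => rw [p.as_sum_range' k hp]
  rw [Finset.sum_mul, finset_sum_coeff]
  refine Finset.sum_congr rfl fun i _ => ?_
  rw [← C_mul_X_pow_eq_monomial, mul_assoc, coeff_C_mul]

/-- The even rows of the discrimination matrix are truncations of `X^(k-1-i) * F`. -/
theorem disc_evenEntry (n k i c : ℕ) (hkn : k ≤ n) (hi : i < k) (hc : c < 2 * k)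
    (f : Polynomial ℝ) (hdeg : (f.map (algebraMap ℝ ℂ)).natDegree = n) :
    algebraMap ℝ ℂ (discEntry n f (2 * i) c)
      = ((X : Polynomial ℂ) ^ (k - 1 - i) * f.map (algebraMap ℝ ℂ)).coeff (n + k - 1 - c) := by
  rw [show (X : Polynomial ℂ) ^ (k - 1 - i) * f.map (algebraMap ℝ ℂ)
      = f.map (algebraMap ℝ ℂ) * X ^ (k - 1 - i) from mul_comm _ _, coeff_mul_X_pow']
  rw [discEntry]
  simp only [Nat.mul_mod_right, Nat.mul_div_cancel_left _ (by norm_num : 0 < 2), if_pos rfl,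
    if_true, eq_self_iff_true]
  by_cases hg : i ≤ c ∧ c ≤ i + n
  · rw [if_pos hg, if_pos (show k - 1 - i ≤ n + k - 1 - c by omega),
      show n + k - 1 - c - (k - 1 - i) = n - (c - i) by omega, ← coeff_map]
  · rw [if_neg hg, map_zero]
    rcases Nat.lt_or_ge c i with hci | hci
    · rw [if_pos (show k - 1 - i ≤ n + k - 1 - c by omega)]
      refine (coeff_eq_zero_of_natDegree_lt ?_).symm
      omega
    · rw [if_neg (show ¬ k - 1 - i ≤ n + k - 1 - c by omega)]

/-- The odd rows of the discrimination matrix are truncations of `X^(k-1-i) * F'`. -/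
theorem disc_oddEntry (n k i c : ℕ) (hkn : k ≤ n) (hk1 : 1 ≤ k) (hi : i < k) (hc : c < 2 * k)
    (f : Polynomial ℝ) (hdeg : (f.map (algebraMap ℝ ℂ)).natDegree = n) :
    algebraMap ℝ ℂ (discEntry n f (2 * i + 1) c)
      = ((X : Polynomial ℂ) ^ (k - 1 - i) * derivative (f.map (algebraMap ℝ ℂ))).coeff
          (n + k - 1 - c) := by
  have hd : (derivative (f.map (algebraMap ℝ ℂ))).natDegree ≤ n - 1 :=
    hdeg ▸ natDegree_derivative_le _
  rw [show (X : Polynomial ℂ) ^ (k - 1 - i) * derivative (f.map (algebraMap ℝ ℂ))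
      = derivative (f.map (algebraMap ℝ ℂ)) * X ^ (k - 1 - i) from mul_comm _ _,
    coeff_mul_X_pow']
  rw [discEntry]
  have h2 : (2 * i + 1) % 2 = 1 := by omega
  have h3 : (2 * i + 1) / 2 = i := by omega
  rw [h2, h3]
  simp only [one_ne_zero, if_false]
  by_cases hg : i + 1 ≤ c ∧ c ≤ i + n
  · rw [if_pos hg, if_pos (show k - 1 - i ≤ n + k - 1 - c by omega),
      show n + k - 1 - c - (k - 1 - i) = n - 1 - (c - (i + 1)) by omega,
      coeff_derivative, coeff_map,
      show n - 1 - (c - (i + 1)) + 1 = n - (c - (i + 1)) by omega]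
    push_cast
    rw [show ((n - 1 - (c - (i + 1)) : ℕ) : ℂ) + 1 = ((n - (c - (i + 1)) : ℕ) : ℂ) by
      have hq : (n - 1 - (c - (i + 1))) + 1 = n - (c - (i + 1)) := by omega
      exact_mod_cast congrArg (Nat.cast : ℕ → ℂ) hq]
    simp only [Complex.coe_algebraMap]
    ring
  · rw [if_neg hg, map_zero]
    rcases Nat.lt_or_ge c (i + 1) with hci | hci
    · rw [if_pos (show k - 1 - i ≤ n + k - 1 - c by omega)]
      refine (coeff_eq_zero_of_natDegree_lt ?_).symm
      omega
    · rw [if_neg (show ¬ k - 1 - i ≤ n + k - 1 - c by omega)]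

/-- If a degree-`n` complex polynomial has fewer than `k` distinct roots, there are
small-degree `u`, `v` with `u * F = v * F'`. -/
theorem disc_exists_uv (n k : ℕ) (hk : 1 ≤ k) (hkn : k ≤ n) (F : Polynomial ℂ) (hF : F ≠ 0)
    (hdeg : F.natDegree = n) (hm : F.roots.toFinset.card < k) :
    ∃ u v : Polynomial ℂ, v ≠ 0 ∧ u.natDegree < k ∧ v.natDegree < k ∧
      u * F = v * derivative F := by
  classical
  set m := F.roots.toFinset.card with hmdef
  have hn1 : 1 ≤ n := le_trans hk hkn
  have hFs : Splits F := IsAlgClosed.splits F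
  have hcard : Multiset.card F.roots = n := by
    rw [splits_iff_card_roots] at hFs; rw [hFs, hdeg]
  have hF' : derivative F ≠ 0 := by
    intro h0
    have := natDegree_eq_zero_of_derivative_eq_zero h0
    omega
  have hF'deg : (derivative F).natDegree ≤ n - 1 := hdeg ▸ natDegree_derivative_le F
  set W : Polynomial ℂ :=
    ∏ r ∈ F.roots.toFinset, (X - C r) ^ (F.rootMultiplicity r - 1) with hWdef
  have hsum : ∑ r ∈ F.roots.toFinset, F.rootMultiplicity r = n := by
    rw [← hcard, ← Multiset.toFinset_sum_count_eq]
    exact Finset.sum_congr rfl fun r _ => (count_roots F).symm ▸ rfl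
  have hmult : ∀ r ∈ F.roots.toFinset, 1 ≤ F.rootMultiplicity r := by
    intro r hr
    rw [Multiset.mem_toFinset, mem_roots hF] at hr
    exact (rootMultiplicity_pos hF).mpr hr
  have hWdeg : W.natDegree = n - m := by
    rw [hWdef, natDegree_prod _ _ (fun r _ => pow_ne_zero _ (X_sub_C_ne_zero r))]
    have : ∀ r ∈ F.roots.toFinset, ((X - C r) ^ (F.rootMultiplicity r - 1)).natDegree
        = F.rootMultiplicity r - 1 := fun r _ => by
      rw [natDegree_pow, natDegree_X_sub_C, mul_one]
    rw [Finset.sum_congr rfl this]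
    have h2 : ∑ r ∈ F.roots.toFinset, F.rootMultiplicity r
        = ∑ r ∈ F.roots.toFinset, ((F.rootMultiplicity r - 1) + 1) :=
      Finset.sum_congr rfl fun r hr => by have := hmult r hr; omega
    rw [Finset.sum_add_distrib, Finset.sum_const, smul_eq_mul, mul_one] at h2
    omega
  have hWF : W ∣ F := by
    have h1 : W ∣ ∏ r ∈ F.roots.toFinset, (X - C r) ^ F.rootMultiplicity r :=
      Finset.prod_dvd_prod_of_dvd _ _ fun r _ => pow_dvd_pow _ (Nat.sub_le _ _)
    refine h1.trans ?_
    rw [← prod_multiset_root_eq_finset_root]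
    exact prod_multiset_X_sub_C_dvd F
  have hWF' : W ∣ derivative F := by
    refine Finset.prod_dvd_of_coprime (fun a ha b hb hab => ?_) (fun r hr => ?_)
    · exact (pairwise_coprime_X_sub_C Function.injective_id hab).pow
    · have hroot : F.IsRoot r := by
        rw [Multiset.mem_toFinset, mem_roots hF] at hr; exact hr
      rw [← derivative_rootMultiplicity_of_root hroot]
      exact pow_rootMultiplicity_dvd _ r
  set g := EuclideanDomain.gcd F (derivative F) with hgdef
  have hg0 : g ≠ 0 := by
    intro h0
    exact hF (EuclideanDomain.gcd_eq_zero_iff.mp h0).1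
  have hWg : W ∣ g := EuclideanDomain.dvd_gcd hWF hWF'
  have hgdeg : n - m ≤ g.natDegree := hWdeg ▸ natDegree_le_of_dvd hWg hg0
  obtain ⟨v, hv⟩ := EuclideanDomain.gcd_dvd_left F (derivative F)
  obtain ⟨u, hu⟩ := EuclideanDomain.gcd_dvd_right F (derivative F)
  rw [← hgdef] at hv hu
  have hv0 : v ≠ 0 := by rintro rfl; rw [mul_zero] at hv; exact hF hv
  have hvdeg : v.natDegree < k := by
    have := natDegree_mul hg0 hv0
    rw [← hv, hdeg] at this
    omega
  have hudeg : u.natDegree < k := by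
    rcases eq_or_ne u 0 with rfl | hu0
    · simpa using Nat.succ_le_iff.mp hk
    · have := natDegree_mul hg0 hu0
      rw [← hu] at this
      omega
  exact ⟨u, v, hv0, hudeg, hvdeg, by rw [hu, hv]; ring⟩

/-- Let `f` be a real polynomial of degree `n` with nonzero leading
coefficient and discriminant sequence `[D₁(f), …, Dₙ(f)]`.  If `f` has at most
`n - j` distinct roots in `ℂ` (for some `0 ≤ j ≤ n`), then the last `j` members of
the discriminant sequence vanish: `D_{n-j+1}(f) = ⋯ = Dₙ(f) = 0`. -/
theorem statement2 (n j : ℕ) (hj : j ≤ n) (f : Polynomial ℝ) (hf : f ≠ 0)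
    (hdeg : f.natDegree = n)
    (h : (f.map (algebraMap ℝ ℂ)).roots.toFinset.card ≤ n - j) :
    ∀ k, n - j < k → k ≤ n → discSeq n f k = 0 := by
  intro k hklow hkn
  classical
  have hk1 : 1 ≤ k := by omega
  set F := f.map (algebraMap ℝ ℂ) with hFdef
  have hinj : Function.Injective (algebraMap ℝ ℂ) := RingHom.injective _
  have hFne : F ≠ 0 := by
    rw [hFdef, Polynomial.map_ne_zero_iff hinj]; exact hf
  have hFdeg : F.natDegree = n := by
    rw [hFdef, natDegree_map_eq_of_injective hinj, hdeg]
  have hm : F.roots.toFinset.card < k := lt_of_le_of_lt h hklow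
  obtain ⟨u, v, hv0, hudeg, hvdeg, huv⟩ :=
    disc_exists_uv n k hk1 hkn F hFne hFdeg hm
  -- the complexified matrix
  set M : Matrix (Fin (2 * k)) (Fin (2 * k)) ℂ :=
    (Matrix.of fun i j : Fin (2 * k) => discEntry n f i j).map (algebraMap ℝ ℂ) with hMdef
  -- the dependence vector
  set cvec : Fin (2 * k) → ℂ := fun i =>
    if (i : ℕ) % 2 = 0 then u.coeff (k - 1 - (i : ℕ) / 2)
    else -v.coeff (k - 1 - (i : ℕ) / 2) with hcvec
  have hcne : cvec ≠ 0 := by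
    intro h0
    have hlt : 2 * (k - 1 - v.natDegree) + 1 < 2 * k := by omega
    have := congrFun h0 ⟨2 * (k - 1 - v.natDegree) + 1, hlt⟩
    rw [hcvec] at this
    simp only [Pi.zero_apply] at this
    rw [if_neg (by omega)] at this
    rw [show (2 * (k - 1 - v.natDegree) + 1) / 2 = k - 1 - v.natDegree by omega,
      show k - 1 - (k - 1 - v.natDegree) = v.natDegree by omega] at this
    exact (leadingCoeff_ne_zero.mpr hv0) (neg_eq_zero.mp this)
  have hdep : Matrix.vecMul cvec M = 0 := by
    funext c
    have hkey : ∀ r : ℕ, r < 2 * k →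
        (if r % 2 = 0 then u.coeff (k - 1 - r / 2) else -v.coeff (k - 1 - r / 2)) *
          algebraMap ℝ ℂ (discEntry n f r (c : ℕ)) =
        (if r % 2 = 0 then u.coeff (k - 1 - r / 2) else -v.coeff (k - 1 - r / 2)) *
          algebraMap ℝ ℂ (discEntry n f r (c : ℕ)) := fun _ _ => rfl
    show (∑ i : Fin (2 * k), cvec i * M i c) = 0
    have hrw : (∑ i : Fin (2 * k), cvec i * M i c)
        = ∑ r ∈ Finset.range (2 * k),
            (if r % 2 = 0 then u.coeff (k - 1 - r / 2) else -v.coeff (k - 1 - r / 2)) *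
              algebraMap ℝ ℂ (discEntry n f r (c : ℕ)) := by
      rw [← Fin.sum_univ_eq_sum_range (fun r =>
        (if r % 2 = 0 then u.coeff (k - 1 - r / 2) else -v.coeff (k - 1 - r / 2)) *
          algebraMap ℝ ℂ (discEntry n f r (c : ℕ))) (2 * k)]
      exact Finset.sum_congr rfl fun i _ => rfl
    rw [hrw, disc_sum_split]
    have hceven : ∀ i ∈ Finset.range k,
        (if (2 * i) % 2 = 0 then u.coeff (k - 1 - (2 * i) / 2)
          else -v.coeff (k - 1 - (2 * i) / 2)) *
          algebraMap ℝ ℂ (discEntry n f (2 * i) (c : ℕ))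
        = u.coeff (k - 1 - i) * ((X : Polynomial ℂ) ^ (k - 1 - i) * F).coeff
            (n + k - 1 - (c : ℕ)) := by
      intro i hi
      rw [Finset.mem_range] at hi
      rw [if_pos (by omega), show (2 * i) / 2 = i by omega,
        disc_evenEntry n k i (c : ℕ) hkn hi c.isLt f (hFdef ▸ hFdeg)]
    have hcodd : ∀ i ∈ Finset.range k,
        (if (2 * i + 1) % 2 = 0 then u.coeff (k - 1 - (2 * i + 1) / 2)
          else -v.coeff (k - 1 - (2 * i + 1) / 2)) *
          algebraMap ℝ ℂ (discEntry n f (2 * i + 1) (c : ℕ))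
        = -(v.coeff (k - 1 - i) * ((X : Polynomial ℂ) ^ (k - 1 - i) * derivative F).coeff
            (n + k - 1 - (c : ℕ))) := by
      intro i hi
      rw [Finset.mem_range] at hi
      rw [if_neg (by omega), show (2 * i + 1) / 2 = i by omega,
        disc_oddEntry n k i (c : ℕ) hkn hk1 hi c.isLt f (hFdef ▸ hFdeg), neg_mul]
    rw [Finset.sum_congr rfl hceven, Finset.sum_congr rfl hcodd, Finset.sum_neg_distrib,
      disc_combo k u F hudeg, disc_combo k v (derivative F) hvdeg, huv]
    ring
  have hdet : M.det = 0 := Matrix.exists_vecMul_eq_zero_iff.mp ⟨cvec, hcne, hdep⟩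
  have : algebraMap ℝ ℂ (discSeq n f k) = 0 := by
    rw [discSeq, RingHom.map_det, RingHom.mapMatrix_apply, ← hMdef, hdet]
  exact hinj (by rw [this, map_zero])
end

section
/- Let f be a real polynomial of degree n with nonzero leading coefficient, and suppose the revised sign list of its discriminant sequence contains exactly k zeros. Then the polynomial Δ_k(f) of the multiple factor sequence is a greatest common divisor of f and its derivative f′; that is, Δ_k(f) equals gcd(f, f′) up to a nonzero real constant factor. -/
open Polynomial

/-- `sign(x)` : `1, 0, -1` according as `x > 0`, `x = 0`, `x < 0`. -/
noncomputable def signOf (x : ℝ) : ℤ := if 0 < x then 1 else if x < 0 then -1 else 0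

/-- The sign list `[sign D₁(f), …, sign Dₙ(f)]` of the discriminant sequence. -/
noncomputable def signList (n : ℕ) (f : Polynomial ℝ) : List ℤ :=
  (List.range n).map fun i => signOf (discSeq n f (i + 1))

/-- The `p`-th entry of the revised sign list obtained from a sign list `s`:
nonzero entries are unchanged; an internal zero (one with some nonzero entry before
it and some nonzero entry after it) at distance `t` from the nearest nonzero entry
`sᵢ` to its left is replaced by `(-1)^⌊(t+1)/2⌋ · sᵢ` (the period-four pattern
`-sᵢ, -sᵢ, sᵢ, sᵢ, …`); trailing zeros are unchanged. -/
noncomputable def revisedEntry (s : List ℤ) (p : ℕ) : ℤ := by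
  classical
  exact
    if s.getD p 0 ≠ 0 then s.getD p 0
    else if (∃ i < p, s.getD i 0 ≠ 0) ∧ (∃ j < s.length, p < j ∧ s.getD j 0 ≠ 0) then
      (-1) ^ ((p - Nat.findGreatest (fun i => s.getD i 0 ≠ 0) p + 1) / 2) *
        s.getD (Nat.findGreatest (fun i => s.getD i 0 ≠ 0) p) 0
    else 0

/-- The revised sign list of a sign list `s`. -/
noncomputable def revisedSignList (s : List ℤ) : List ℤ :=
  (List.range s.length).map (revisedEntry s)

/-- The number of sign changes in a list of signs. -/
def signChanges (l : List ℤ) : ℕ :=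
  (l.zip l.tail).countP fun p => decide (p.1 * p.2 < 0)

/-- The `2k × 2k` submatrix `M(k, l)` of the discrimination matrix of `f` (regarded
as having degree `n`), formed by its first `2k` rows together with its first
`2k - 1` columns and its `(2k + l)`-th column (1-indexed). -/
def subM (n : ℕ) (f : Polynomial ℝ) (k l : ℕ) : Matrix (Fin (2 * k)) (Fin (2 * k)) ℝ :=
  Matrix.of fun i j =>
    discEntry n f i (if (j : ℕ) < 2 * k - 1 then (j : ℕ) else 2 * k - 1 + l)

/-- The polynomial `Δ_k(f) = Σ_{i=0}^{k} det(M(n-k, i)) · x^{k-i}` of the multiple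
factor sequence of `f`. -/
noncomputable def deltaPoly (n : ℕ) (f : Polynomial ℝ) (k : ℕ) : Polynomial ℝ :=
  ∑ i ∈ Finset.range (k + 1),
    Polynomial.C (Matrix.det (subM n f (n - k) i)) * Polynomial.X ^ (k - i)

section Lemmas
variable {n : ℕ} {f : Polynomial ℝ}

lemma discEntry_even (i c : ℕ) :
    discEntry n f (2*i) c =
      if i ≤ c ∧ c ≤ i + n then f.coeff (n - (c - i)) else 0 := by
  simp [discEntry, Nat.mul_div_cancel_left, Nat.mul_mod_right]

lemma discEntry_odd (i c : ℕ) :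
    discEntry n f (2*i+1) c =
      if i + 1 ≤ c ∧ c ≤ i + n then
        ((n - (c - (i+1)) : ℕ) : ℝ) * f.coeff (n - (c - (i+1))) else 0 := by
  have h1 : (2*i+1) % 2 = 1 := by omega
  have h2 : (2*i+1) / 2 = i := by omega
  simp [discEntry, h1, h2]

lemma coeffQ_even (hdeg : f.natDegree = n) {m i c : ℕ} (hi : i < m) (hc : c ≤ n + m - 1) :
    (f * Polynomial.X ^ (m - 1 - i)).coeff (n + m - 1 - c) = discEntry n f (2*i) c := by
  rw [discEntry_even, Polynomial.coeff_mul_X_pow']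
  by_cases h : i ≤ c ∧ c ≤ i + n
  · have hle : m - 1 - i ≤ n + m - 1 - c := by omega
    rw [if_pos h, if_pos hle]
    congr 1
    omega
  · rw [if_neg h]
    rcases Nat.lt_or_ge c i with hlt | hge
    · -- c < i : coefficient index exceeds degree
      rw [if_pos (by omega : m - 1 - i ≤ n + m - 1 - c)]
      apply Polynomial.coeff_eq_zero_of_natDegree_lt
      omega
    · -- c > i + n
      have hcn : i + n < c := by omega
      rw [if_neg (by omega)]

lemma coeffQ_odd (hdeg : f.natDegree = n) {m i c : ℕ} (hi : i < m) (hc : c ≤ n + m - 1) :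
    (Polynomial.derivative f * Polynomial.X ^ (m - 1 - i)).coeff (n + m - 1 - c)
      = discEntry n f (2*i+1) c := by
  rw [discEntry_odd, Polynomial.coeff_mul_X_pow']
  by_cases h : i + 1 ≤ c ∧ c ≤ i + n
  · have hle : m - 1 - i ≤ n + m - 1 - c := by omega
    rw [if_pos h, if_pos hle, Polynomial.coeff_derivative]
    have he : n + m - 1 - c - (m - 1 - i) + 1 = n - (c - (i+1)) := by omega
    have hcast : ((n + m - 1 - c - (m - 1 - i) : ℕ) : ℝ) + 1
        = ((n + m - 1 - c - (m - 1 - i) + 1 : ℕ) : ℝ) := by push_cast; ring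
    rw [hcast, he, mul_comm]
  · rw [if_neg h]
    rcases Nat.lt_or_ge c (i+1) with hlt | hge
    · rw [if_pos (by omega : m - 1 - i ≤ n + m - 1 - c), Polynomial.coeff_derivative]
      have : f.coeff (n + m - 1 - c - (m - 1 - i) + 1) = 0 := by
        apply Polynomial.coeff_eq_zero_of_natDegree_lt
        omega
      rw [this, zero_mul]
    · have hcn : i + n < c := by omega
      rw [if_neg (by omega)]

end Lemmas
section Lemmas2
open Polynomial
variable {n : ℕ} {f : Polynomial ℝ}

lemma keyQ_even (hdeg : f.natDegree = n) {m i : ℕ} (hmn : m ≤ n) (hi : i < m) :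
    f * X ^ (m - 1 - i)
      = ∑ c ∈ Finset.range (n + m), C (discEntry n f (2*i) c) * X ^ (n + m - 1 - c) := by
  ext e
  rw [Polynomial.finset_sum_coeff]
  simp only [Polynomial.coeff_C_mul, Polynomial.coeff_X_pow]
  by_cases he : e ≤ n + m - 1
  · rw [Finset.sum_eq_single (n + m - 1 - e)]
    · rw [if_pos (by omega), mul_one,
        ← coeffQ_even hdeg hi (by omega : n + m - 1 - e ≤ n + m - 1)]
      congr 1
      omega
    · intro c hc hne
      rw [Finset.mem_range] at hc
      rw [if_neg (by omega), mul_zero]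
    · intro h
      exact absurd (Finset.mem_range.mpr (by omega)) h
  · have hdle : (f * X ^ (m - 1 - i)).natDegree < e := by
      refine lt_of_le_of_lt (Polynomial.natDegree_mul_le.trans ?_) (by omega : n + m - 1 < e)
      rw [hdeg, Polynomial.natDegree_X_pow]
      omega
    rw [Polynomial.coeff_eq_zero_of_natDegree_lt hdle, Finset.sum_eq_zero]
    intro c hc
    rw [if_neg (by omega), mul_zero]

lemma keyQ_odd (hdeg : f.natDegree = n) {m i : ℕ} (hmn : m ≤ n) (hi : i < m) :
    Polynomial.derivative f * X ^ (m - 1 - i)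
      = ∑ c ∈ Finset.range (n + m), C (discEntry n f (2*i+1) c) * X ^ (n + m - 1 - c) := by
  ext e
  rw [Polynomial.finset_sum_coeff]
  simp only [Polynomial.coeff_C_mul, Polynomial.coeff_X_pow]
  by_cases he : e ≤ n + m - 1
  · rw [Finset.sum_eq_single (n + m - 1 - e)]
    · rw [if_pos (by omega), mul_one,
        ← coeffQ_odd hdeg hi (by omega : n + m - 1 - e ≤ n + m - 1)]
      congr 1
      omega
    · intro c hc hne
      rw [Finset.mem_range] at hc
      rw [if_neg (by omega), mul_zero]
    · intro h
      exact absurd (Finset.mem_range.mpr (by omega)) h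
  · have hdle : (Polynomial.derivative f * X ^ (m - 1 - i)).natDegree < e := by
      refine lt_of_le_of_lt (Polynomial.natDegree_mul_le.trans ?_) (by omega : n + m - 1 < e)
      have := Polynomial.natDegree_derivative_le f
      rw [hdeg] at this
      rw [Polynomial.natDegree_X_pow]
      omega
    rw [Polynomial.coeff_eq_zero_of_natDegree_lt hdle, Finset.sum_eq_zero]
    intro c hc
    rw [if_neg (by omega), mul_zero]

end Lemmas2
section Lemmas3
open Polynomial

lemma det_updateCol_finset_sum {R : Type*} [CommRing R] {N : Type*} [DecidableEq N]
    [Fintype N] (A : Matrix N N R) (j : N) {ι : Type*} (s : Finset ι) (u : ι → N → R) :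
    (A.updateCol j (fun r => ∑ l ∈ s, u l r)).det
      = ∑ l ∈ s, (A.updateCol j (u l)).det := by
  classical
  induction s using Finset.induction_on with
  | empty =>
      rw [Finset.sum_empty]
      exact Matrix.det_eq_zero_of_column_eq_zero j (fun i => by
        simp [Matrix.updateCol_self])
  | @insert a s ha ih =>
      rw [Finset.sum_insert ha]
      simp only [Finset.sum_insert ha]
      rw [show (fun r => u a r + ∑ l ∈ s, u l r) = u a + (fun r => ∑ l ∈ s, u l r) from rfl,
        Matrix.det_updateCol_add, ih]

lemma sum_range_add' {M : Type*} [AddCommMonoid M] (g : ℕ → M) (a b : ℕ) :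
    ∑ c ∈ Finset.range (a + b), g c
      = (∑ c ∈ Finset.range a, g c) + ∑ l ∈ Finset.range b, g (a + l) := by
  induction b with
  | zero => simp
  | succ b ih =>
      rw [show a + (b+1) = (a+b)+1 from rfl, Finset.sum_range_succ, ih,
      Finset.sum_range_succ (fun l => g (a+l)) b, add_assoc]

variable {n : ℕ} {f : Polynomial ℝ}

lemma exists_comb (hdeg : f.natDegree = n) {k : ℕ} (hkn : k < n) :
    ∃ A B : Polynomial ℝ,
      deltaPoly n f k = f * A + Polynomial.derivative f * B := by
  classical
  set m := n - k with hm
  have hm1 : 1 ≤ m := by omega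
  have hmn : m ≤ n := by omega
  have hnmk : n = m + k := by omega
  set base : Matrix (Fin (2*m)) (Fin (2*m)) ℝ[X] :=
    Matrix.of (fun r j : Fin (2*m) => C (discEntry n f r j)) with hbase
  have hjl : 2*m-1 < 2*m := by omega
  set jl : Fin (2*m) := ⟨2*m-1, hjl⟩ with hjldef
  set Tcol : Fin (2*m) → ℝ[X] :=
    fun r => ∑ l ∈ Finset.range (k+1), C (discEntry n f r (2*m-1+l)) * X ^ (k-l)
    with hTcol
  -- Step A : deltaPoly = det (base with last column Tcol)
  have stepA : deltaPoly n f k = (base.updateCol jl Tcol).det := by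
    rw [hTcol, det_updateCol_finset_sum base jl (Finset.range (k+1))
      (fun l r => C (discEntry n f r (2*m-1+l)) * X ^ (k-l))]
    unfold deltaPoly
    rw [← hm]
    refine Finset.sum_congr rfl (fun l _ => ?_)
    have h1 : (fun r : Fin (2*m) => C (discEntry n f r (2*m-1+l)) * X ^ (k-l))
        = (X ^ (k-l) : ℝ[X]) • (fun r : Fin (2*m) => C (discEntry n f r (2*m-1+l))) := by
      funext r
      simp only [Pi.smul_apply, smul_eq_mul]
      ring
    rw [h1, Matrix.det_updateCol_smul]
    have h2 : base.updateCol jl (fun r : Fin (2*m) => C (discEntry n f r (2*m-1+l)))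
        = (subM n f m l).map C := by
      refine Matrix.ext (fun r j => ?_)
      rw [Matrix.updateCol_apply]
      by_cases hj : j = jl
      · subst hj
        rw [if_pos rfl]
        simp only [Matrix.map_apply, subM, Matrix.of_apply]
        rw [if_neg (lt_irrefl _)]
      · have hjlt : (j : ℕ) < 2*m-1 := by
          have h1 := j.isLt
          have h2 : (j : ℕ) ≠ 2*m-1 := fun h => hj (Fin.ext h)
          omega
        rw [if_neg hj]
        simp only [hbase, Matrix.map_apply, subM, Matrix.of_apply, if_pos hjlt]
    rw [h2, ← RingHom.mapMatrix_apply, ← RingHom.map_det]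
    ring
  -- the Q column
  set Qcol : Fin (2*m) → ℝ[X] :=
    fun r => (if (r : ℕ) % 2 = 0 then f else Polynomial.derivative f) * X ^ (m - 1 - (r : ℕ)/2)
    with hQcol
  have hsum : ∀ g : ℕ → ℝ[X], ∑ c ∈ Finset.range (n+m), g c
      = (∑ c ∈ Finset.range (2*m-1), g c) + ∑ l ∈ Finset.range (k+1), g (2*m-1+l) := by
    intro g
    have h0 : n + m = (2*m-1) + (k+1) := by omega
    rw [h0, sum_range_add' g (2*m-1) (k+1)]
  have hQT : ∀ r : Fin (2*m), Qcol r
      = (∑ c ∈ Finset.range (2*m-1), C (discEntry n f (r : ℕ) c) * X ^ (n+m-1-c))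
        + Tcol r := by
    intro r
    have hsplit : Qcol r
        = ∑ c ∈ Finset.range (n+m), C (discEntry n f (r : ℕ) c) * X ^ (n+m-1-c) := by
      rcases Nat.even_or_odd (r : ℕ) with ⟨i, hi2⟩ | ⟨i, hi2⟩
      · have hre : (r : ℕ) = 2*i := by omega
        have him : i < m := by have := r.isLt; omega
        rw [hQcol]
        simp only [hre, Nat.mul_mod_right, Nat.mul_div_cancel_left i (by norm_num : 0 < 2),
          if_pos rfl]
        exact keyQ_even hdeg hmn him
      · have hre : (r : ℕ) = 2*i+1 := by omega
        have him : i < m := by have := r.isLt; omega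
        have hmod : (2*i+1) % 2 = 1 := by omega
        have hdiv : (2*i+1) / 2 = i := by omega
        rw [hQcol]
        simp only [hre, hmod, hdiv, one_ne_zero, if_false]
        exact keyQ_odd hdeg hmn him
    rw [hsplit, hsum]
    congr 1
    rw [hTcol]
    refine Finset.sum_congr rfl (fun l _ => ?_)
    have : n + m - 1 - (2*m-1+l) = k - l := by omega
    rw [this]
  -- step B : replacing T column by Q column keeps the determinant
  have stepB : (base.updateCol jl Qcol).det = (base.updateCol jl Tcol).det := by
    have hcolsum : base.updateCol jl Qcol
        = base.updateCol jl
            ((fun r : Fin (2*m) =>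
                ∑ c ∈ Finset.range (2*m-1), C (discEntry n f (r : ℕ) c) * X ^ (n+m-1-c))
              + Tcol) :=
      congrArg _ (funext hQT)
    rw [hcolsum, Matrix.det_updateCol_add,
      det_updateCol_finset_sum base jl (Finset.range (2*m-1))
        (fun c r => C (discEntry n f (r : ℕ) c) * X ^ (n+m-1-c))]
    have hzero : ∀ c ∈ Finset.range (2*m-1),
        (base.updateCol jl (fun r => C (discEntry n f (r : ℕ) c) * X ^ (n+m-1-c))).det
          = 0 := by
      intro c hc
      rw [Finset.mem_range] at hc
      have h1 : (fun r : Fin (2*m) => C (discEntry n f (r : ℕ) c) * X ^ (n+m-1-c))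
          = (X ^ (n+m-1-c) : ℝ[X]) • (fun r : Fin (2*m) => C (discEntry n f (r : ℕ) c)) := by
        funext r
        simp only [Pi.smul_apply, smul_eq_mul]
        ring
      rw [h1, Matrix.det_updateCol_smul]
      have hcne : (⟨c, by omega⟩ : Fin (2*m)) ≠ jl := by
        intro h
        have := congrArg (fun x : Fin (2*m) => (x : ℕ)) h
        simp only [hjldef] at this
        omega
      rw [Matrix.det_zero_of_column_eq hcne ?_, mul_zero]
      intro rr
      rw [Matrix.updateCol_ne hcne, Matrix.updateCol_self]
      rfl
    rw [Finset.sum_congr rfl hzero, Finset.sum_const_zero, zero_add]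
  -- step C : the Q-column determinant is a combination of f and f'
  set ucol : Fin (2*m) → ℝ[X] :=
    fun r => if (r : ℕ) % 2 = 0 then X ^ (m - 1 - (r : ℕ)/2) else 0 with hucol
  set wcol : Fin (2*m) → ℝ[X] :=
    fun r => if (r : ℕ) % 2 = 0 then 0 else X ^ (m - 1 - (r : ℕ)/2) with hwcol
  have hQuw : Qcol = f • ucol + Polynomial.derivative f • wcol := by
    funext r
    by_cases hp : (r : ℕ) % 2 = 0 <;>
      simp [hQcol, hucol, hwcol, hp]
  refine ⟨(base.updateCol jl ucol).det, (base.updateCol jl wcol).det, ?_⟩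
  rw [stepA, ← stepB, hQuw, Matrix.det_updateCol_add, Matrix.det_updateCol_smul,
    Matrix.det_updateCol_smul]

end Lemmas3
section Lemmas4
open Polynomial
variable {n : ℕ} {f : Polynomial ℝ}

lemma det_subM_zero (m : ℕ) : (subM n f m 0).det = discSeq n f m := by
  have h : subM n f m 0 = Matrix.of fun i j : Fin (2*m) => discEntry n f i j := by
    refine Matrix.ext (fun r j => ?_)
    simp only [subM, Matrix.of_apply]
    by_cases hj : (j : ℕ) < 2*m-1
    · rw [if_pos hj]
    · have hje : (j : ℕ) = 2*m-1 := by have := j.isLt; omega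
      rw [if_neg hj, Nat.add_zero, hje]
  rw [h]
  rfl

lemma coeff_deltaPoly_self : (deltaPoly n f k).coeff k = discSeq n f (n-k) := by
  unfold deltaPoly
  rw [Polynomial.finset_sum_coeff, Finset.sum_eq_single 0]
  · rw [Nat.sub_zero, Polynomial.coeff_C_mul, Polynomial.coeff_X_pow, if_pos rfl, mul_one,
      det_subM_zero]
  · intro i hi hne
    rw [Finset.mem_range] at hi
    rw [Polynomial.coeff_C_mul, Polynomial.coeff_X_pow, if_neg (by omega), mul_zero]
  · intro h
    exact absurd (Finset.mem_range.mpr (by omega)) h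

lemma natDegree_deltaPoly_le : (deltaPoly n f k).natDegree ≤ k := by
  unfold deltaPoly
  refine Polynomial.natDegree_sum_le_of_forall_le _ _ (fun i _ => ?_)
  refine Polynomial.natDegree_mul_le.trans ?_
  rw [Polynomial.natDegree_C, Polynomial.natDegree_X_pow]
  omega

lemma sum_range_two_mul_s8 {M : Type*} [AddCommMonoid M] (m : ℕ) (g : ℕ → M) :
    ∑ j ∈ Finset.range (2*m), g j = ∑ i ∈ Finset.range m, (g (2*i) + g (2*i+1)) := by
  induction m with
  | zero => simp
  | succ m ih =>
      rw [show 2*(m+1) = (2*m)+1+1 by ring, Finset.sum_range_succ, Finset.sum_range_succ,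
        ih, Finset.sum_range_succ (fun i => g (2*i) + g (2*i+1)) m, add_assoc]

end Lemmas4
section Lemmas5
open Polynomial
variable {n : ℕ} {f : Polynomial ℝ}

lemma discSeq_gcd_ne_zero (hf : f ≠ 0) (hdeg : f.natDegree = n) (hn : 1 ≤ n) :
    discSeq n f (n - (EuclideanDomain.gcd f (Polynomial.derivative f)).natDegree) ≠ 0 := by
  classical
  set h : Polynomial ℝ := EuclideanDomain.gcd f (Polynomial.derivative f) with hh
  set d : ℕ := h.natDegree with hd
  set m : ℕ := n - d with hmdef
  -- basic facts
  have hlc : f.coeff n ≠ 0 := by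
    rw [← hdeg]
    intro h0
    apply hf
    apply Polynomial.leadingCoeff_eq_zero.mp
    rw [Polynomial.leadingCoeff]
    exact h0
  have hf' : Polynomial.derivative f ≠ 0 := by
    intro h0
    have hder := Polynomial.coeff_derivative f (n-1)
    have hn1 : n - 1 + 1 = n := by omega
    rw [h0, Polynomial.coeff_zero, hn1] at hder
    rcases mul_eq_zero.mp hder.symm with h1 | h1
    · exact hlc h1
    · have hpos : ((n-1 : ℕ) : ℝ) + 1 > 0 := by positivity
      rw [h1] at hpos
      exact lt_irrefl 0 hpos
  have hh0 : h ≠ 0 := fun h0 => hf (EuclideanDomain.gcd_eq_zero_iff.mp h0).1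
  have hdn : d ≤ n - 1 := by
    have h1 : d ≤ (Polynomial.derivative f).natDegree :=
      Polynomial.natDegree_le_of_dvd (EuclideanDomain.gcd_dvd_right _ _) hf'
    have h2 := Polynomial.natDegree_derivative_le f
    omega
  have hm1 : 1 ≤ m := by omega
  have hmn : m ≤ n := by omega
  -- suppose the discriminant vanishes
  intro hD
  have hD' : (Matrix.of fun i j : Fin (2*m) => discEntry n f i j).det = 0 := hD
  obtain ⟨v, hv0, hvM⟩ := Matrix.exists_vecMul_eq_zero_iff.mpr hD'
  set vv : ℕ → ℝ := fun j => if hj : j < 2*m then v ⟨j, hj⟩ else 0 with hvv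
  set u : Polynomial ℝ := ∑ i ∈ Finset.range m, C (vv (2*i)) * X ^ (m-1-i) with hu
  set w : Polynomial ℝ := ∑ i ∈ Finset.range m, C (vv (2*i+1)) * X ^ (m-1-i) with hw
  set g : Polynomial ℝ := u * f + w * Polynomial.derivative f with hg
  -- the coefficients of g in the window vanish
  have hcoef : ∀ c : ℕ, c < 2*m → g.coeff (n+m-1-c) = 0 := by
    intro c hc
    have hc' : c ≤ n + m - 1 := by omega
    have h1 : g.coeff (n+m-1-c)
        = ∑ i ∈ Finset.range m,
            (vv (2*i) * discEntry n f (2*i) c + vv (2*i+1) * discEntry n f (2*i+1) c) := by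
      rw [hg, Polynomial.coeff_add, hu, hw, Finset.sum_mul, Finset.sum_mul,
        Polynomial.finset_sum_coeff, Polynomial.finset_sum_coeff, ← Finset.sum_add_distrib]
      refine Finset.sum_congr rfl (fun i hi => ?_)
      rw [Finset.mem_range] at hi
      have e1 : C (vv (2*i)) * X ^ (m-1-i) * f = C (vv (2*i)) * (f * X ^ (m-1-i)) := by ring
      have e2 : C (vv (2*i+1)) * X ^ (m-1-i) * Polynomial.derivative f
          = C (vv (2*i+1)) * (Polynomial.derivative f * X ^ (m-1-i)) := by ring
      rw [e1, e2, Polynomial.coeff_C_mul, Polynomial.coeff_C_mul,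
        coeffQ_even hdeg hi hc', coeffQ_odd hdeg hi hc']
    rw [h1, ← sum_range_two_mul_s8 m (fun j => vv j * discEntry n f j c)]
    have h2 : ∑ j ∈ Finset.range (2*m), vv j * discEntry n f j c
        = ∑ r : Fin (2*m), v r * discEntry n f (r : ℕ) c := by
      rw [← Fin.sum_univ_eq_sum_range (fun j => vv j * discEntry n f j c) (2*m)]
      refine Finset.sum_congr rfl (fun r _ => ?_)
      rw [hvv]
      simp only [r.isLt, dif_pos, Fin.eta]
    rw [h2]
    have := congrFun hvM ⟨c, hc⟩
    simpa [Matrix.vecMul, dotProduct] using this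
  -- u and w are not both zero
  have huw : u ≠ 0 ∨ w ≠ 0 := by
    obtain ⟨r, hr⟩ := Function.ne_iff.mp hv0
    have hvvr : vv (r : ℕ) ≠ 0 := by
      rw [hvv]; simpa only [r.isLt, dif_pos, Fin.eta, Pi.zero_apply] using hr
    rcases Nat.even_or_odd (r : ℕ) with ⟨i, hi2⟩ | ⟨i, hi2⟩
    · left
      have him : i < m := by have := r.isLt; omega
      have : u.coeff (m-1-i) = vv (2*i) := by
        rw [hu, Polynomial.finset_sum_coeff, Finset.sum_eq_single i]
        · rw [Polynomial.coeff_C_mul, Polynomial.coeff_X_pow, if_pos rfl, mul_one]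
        · intro i' hi' hne
          rw [Finset.mem_range] at hi'
          rw [Polynomial.coeff_C_mul, Polynomial.coeff_X_pow, if_neg (by omega), mul_zero]
        · exact fun hc => absurd (Finset.mem_range.mpr him) hc
      intro h0
      rw [h0, Polynomial.coeff_zero] at this
      exact hvvr (by rw [show (r:ℕ) = 2*i by omega, ← this])
    · right
      have him : i < m := by have := r.isLt; omega
      have : w.coeff (m-1-i) = vv (2*i+1) := by
        rw [hw, Polynomial.finset_sum_coeff, Finset.sum_eq_single i]
        · rw [Polynomial.coeff_C_mul, Polynomial.coeff_X_pow, if_pos rfl, mul_one]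
        · intro i' hi' hne
          rw [Finset.mem_range] at hi'
          rw [Polynomial.coeff_C_mul, Polynomial.coeff_X_pow, if_neg (by omega), mul_zero]
        · exact fun hc => absurd (Finset.mem_range.mpr him) hc
      intro h0
      rw [h0, Polynomial.coeff_zero] at this
      exact hvvr (by rw [show (r:ℕ) = 2*i+1 by omega, ← this])
  -- degree bounds on u and w
  have hundeg : u.natDegree ≤ m - 1 := by
    rw [hu]
    refine Polynomial.natDegree_sum_le_of_forall_le _ _ (fun i _ => ?_)
    refine Polynomial.natDegree_mul_le.trans ?_
    rw [Polynomial.natDegree_C, Polynomial.natDegree_X_pow]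
    omega
  have hwdeg : w.natDegree ≤ m - 1 := by
    rw [hw]
    refine Polynomial.natDegree_sum_le_of_forall_le _ _ (fun i _ => ?_)
    refine Polynomial.natDegree_mul_le.trans ?_
    rw [Polynomial.natDegree_C, Polynomial.natDegree_X_pow]
    omega
  -- cofactors and coprimality
  obtain ⟨f₁, hf₁⟩ := EuclideanDomain.gcd_dvd_left f (Polynomial.derivative f)
  obtain ⟨g₁, hg₁⟩ := EuclideanDomain.gcd_dvd_right f (Polynomial.derivative f)
  rw [← hh] at hf₁ hg₁
  have hf₁0 : f₁ ≠ 0 := by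
    intro h0; rw [h0, mul_zero] at hf₁; exact hf hf₁
  have hdf₁ : f₁.natDegree = m := by
    have := Polynomial.natDegree_mul hh0 hf₁0
    rw [← hf₁, hdeg] at this
    omega
  have hco : IsCoprime f₁ g₁ := by
    obtain ⟨aa, bb, hbez⟩ : ∃ a b : Polynomial ℝ,
        h = f * a + Polynomial.derivative f * b :=
      ⟨_, _, EuclideanDomain.gcd_eq_gcd_ab f (Polynomial.derivative f)⟩
    rw [hg₁, hf₁] at hbez
    have h2 : h * 1 = h * (f₁ * aa + g₁ * bb) := by
      rw [mul_one]
      calc h = h * f₁ * aa + h * g₁ * bb := hbez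
        _ = _ := by ring
    have h1 := mul_left_cancel₀ hh0 h2
    exact ⟨aa, bb, by linear_combination -h1⟩
  -- g = h * W
  set W : Polynomial ℝ := u * f₁ + w * g₁ with hW
  have hgW : g = h * W := by
    rw [hg, hW, hg₁, hf₁]; ring
  by_cases hW0 : W = 0
  · -- then f₁ divides w, forcing u = w = 0
    have hdvd : f₁ ∣ w * g₁ := by
      refine ⟨-u, ?_⟩
      have : u * f₁ + w * g₁ = 0 := by rw [← hW, hW0]
      linear_combination this
    have hfw : f₁ ∣ w := hco.dvd_of_dvd_mul_right hdvd
    by_cases hw0 : w = 0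
    · have hu0 : u = 0 := by
        have : u * f₁ = 0 := by
          have : u * f₁ + w * g₁ = 0 := by rw [← hW, hW0]
          rw [hw0, zero_mul, add_zero] at this
          exact this
        rcases mul_eq_zero.mp this with h1 | h1
        · exact h1
        · exact absurd h1 hf₁0
      rcases huw with h1 | h1
      · exact h1 hu0
      · exact h1 hw0
    · have := Polynomial.natDegree_le_of_dvd hfw hw0
      rw [hdf₁] at this
      omega
  · -- W ≠ 0 : g has degree in the killed window
    have hg0 : g ≠ 0 := by
      rw [hgW]; exact mul_ne_zero hh0 hW0
    have hdg_lb : d ≤ g.natDegree := by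
      rw [hgW, Polynomial.natDegree_mul hh0 hW0]
      omega
    have hdg_ub : g.natDegree ≤ n + m - 1 := by
      rw [hg]
      refine (Polynomial.natDegree_add_le _ _).trans ?_
      have h1 : (u * f).natDegree ≤ m - 1 + n :=
        Polynomial.natDegree_mul_le.trans (by rw [hdeg]; omega)
      have h2 : (w * Polynomial.derivative f).natDegree ≤ m - 1 + n := by
        refine Polynomial.natDegree_mul_le.trans ?_
        have := Polynomial.natDegree_derivative_le f
        omega
      omega
    have hcge : g.coeff g.natDegree = 0 := by
      have hc : n + m - 1 - g.natDegree < 2*m := by omega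
      have := hcoef (n + m - 1 - g.natDegree) hc
      rw [show n + m - 1 - (n + m - 1 - g.natDegree) = g.natDegree by omega] at this
      exact this
    exact (Polynomial.leadingCoeff_ne_zero.mpr hg0) hcge

end Lemmas5
section Lemmas6
open Polynomial
variable {n : ℕ} {f : Polynomial ℝ}

lemma signOf_eq_zero_iff (x : ℝ) : signOf x = 0 ↔ x = 0 := by
  unfold signOf
  split_ifs with h1 h2
  · exact ⟨fun h => absurd h one_ne_zero, fun h => absurd (h ▸ h1) (lt_irrefl 0)⟩
  · exact ⟨fun h => absurd h (by norm_num), fun h => absurd (h ▸ h2) (lt_irrefl 0)⟩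
  · exact ⟨fun _ => le_antisymm (not_lt.mp h1) (not_lt.mp h2), fun _ => rfl⟩

lemma signList_length : (signList n f).length = n := by
  simp [signList]

lemma getD_signList {p : ℕ} (hp : p < n) :
    (signList n f).getD p 0 = signOf (discSeq n f (p+1)) := by
  rw [List.getD_eq_getElem _ _ (by rw [signList_length]; exact hp)]
  simp [signList]

lemma discSeq_one (hn : 1 ≤ n) : discSeq n f 1 = n * (f.coeff n)^2 := by
  have : discSeq n f 1
      = Matrix.det (Matrix.of fun i j : Fin 2 => discEntry n f i j) := rfl
  rw [this, Matrix.det_fin_two]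
  simp only [Matrix.of_apply]
  have h00 : discEntry n f ((0 : Fin 2) : ℕ) ((0 : Fin 2) : ℕ) = f.coeff n := by
    simp [discEntry]
  have h11 : discEntry n f ((1 : Fin 2) : ℕ) ((1 : Fin 2) : ℕ) = n * f.coeff n := by
    show discEntry n f 1 1 = n * f.coeff n
    unfold discEntry
    rw [if_neg (by norm_num), if_pos (by omega : 1/2 + 1 ≤ 1 ∧ 1 ≤ 1/2 + n)]
    norm_num
  have h10 : discEntry n f ((1 : Fin 2) : ℕ) ((0 : Fin 2) : ℕ) = 0 := by
    simp [discEntry]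
  rw [h00, h11, h10, mul_zero, sub_zero]
  ring

lemma countP_range_ge (t N : ℕ) :
    (List.range N).countP (fun p => decide (t ≤ p)) = N - t := by
  induction N with
  | zero => simp
  | succ N ih =>
      rw [List.range_succ, List.countP_append, ih, List.countP_singleton]
      by_cases hta : t ≤ N <;> simp [hta] <;> omega

lemma count_revised (hdeg : f.natDegree = n) (hn : 1 ≤ n) {t : ℕ}
    (ht1 : 1 ≤ t) (htle : t ≤ n) (htP : discSeq n f t ≠ 0)
    (ht2 : ∀ j, t < j → j ≤ n → discSeq n f j = 0) (hlc : f.coeff n ≠ 0) :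
    (revisedSignList (signList n f)).count 0 = n - t := by
  classical
  set s : List ℤ := signList n f with hs
  have hlen : s.length = n := signList_length
  have hs0 : s.getD 0 0 ≠ 0 := by
    rw [getD_signList hn, ne_eq, signOf_eq_zero_iff, discSeq_one hn]
    positivity
  have hst1 : s.getD (t-1) 0 ≠ 0 := by
    rw [getD_signList (by omega : t - 1 < n), ne_eq, signOf_eq_zero_iff,
      show t - 1 + 1 = t by omega]
    exact htP
  have hmain : ∀ p, p < n → (revisedEntry s p = 0 ↔ t ≤ p) := by
    intro p hp
    constructor
    · intro h0
      by_contra htp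
      push_neg at htp
      by_cases hsp : s.getD p 0 = 0
      · have hp1 : 1 ≤ p := by
          rcases Nat.eq_zero_or_pos p with h | h
          · exact absurd (h ▸ hsp) hs0
          · exact h
        have hpt1 : p < t - 1 := by
          rcases Nat.lt_or_ge p (t-1) with h | h
          · exact h
          · exfalso
            have : p = t - 1 := by omega
            exact hst1 (this ▸ hsp)
        have hval : revisedEntry s p ≠ 0 := by
          unfold revisedEntry
          rw [if_neg (not_not_intro hsp), if_pos
            ⟨⟨0, by omega, hs0⟩, ⟨t-1, by rw [hlen]; omega, by omega, hst1⟩⟩]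
          exact mul_ne_zero (pow_ne_zero _ (by norm_num))
            (Nat.findGreatest_spec (P := fun i => s.getD i 0 ≠ 0) (Nat.zero_le p) hs0)
        exact hval h0
      · have : revisedEntry s p = s.getD p 0 := by
          unfold revisedEntry
          rw [if_pos hsp]
        exact hsp (this ▸ h0)
    · intro htp
      have hsp : s.getD p 0 = 0 := by
        rw [getD_signList hp, signOf_eq_zero_iff]
        exact ht2 (p+1) (by omega) (by omega)
      unfold revisedEntry
      rw [if_neg (not_not_intro hsp), if_neg]
      rintro ⟨-, j, hj, hpj, hne⟩
      rw [hlen] at hj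
      exact hne (by rw [getD_signList hj, signOf_eq_zero_iff]; exact ht2 (j+1) (by omega) (by omega))
  unfold revisedSignList
  rw [hlen, List.count_eq_countP, List.countP_map]
  have hcong : ∀ p ∈ List.range n,
      (((fun x : ℤ => x == 0) ∘ revisedEntry s) p = true ↔ decide (t ≤ p) = true) := by
    intro p hpmem
    rw [List.mem_range] at hpmem
    simp only [Function.comp_apply, beq_iff_eq, decide_eq_true_eq]
    exact hmain p hpmem
  rw [List.countP_congr hcong, countP_range_ge t n]

end Lemmas6
/-- Let `f` be a real polynomial of degree `n` with nonzero leading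
coefficient, and suppose the revised sign list of its discriminant sequence contains
exactly `k` zeros.  Then the polynomial `Δ_k(f)` of the multiple factor sequence is a
greatest common divisor of `f` and its derivative `f'`; that is, `Δ_k(f)` equals
`gcd(f, f')` up to a nonzero real constant factor. -/
theorem statement8 (n : ℕ) (f : Polynomial ℝ) (hf : f ≠ 0) (hdeg : f.natDegree = n)
    (k : ℕ) (hk : (revisedSignList (signList n f)).count 0 = k) :
    Associated (deltaPoly n f k)
      (EuclideanDomain.gcd f (Polynomial.derivative f)) := by
  classical
  rcases Nat.eq_zero_or_pos n with hn0 | hn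
  · -- degenerate case n = 0
    subst hn0
    have hk0 : k = 0 := by
      have : revisedSignList (signList 0 f) = [] := by
        simp [revisedSignList, signList]
      rw [this] at hk
      simpa using hk.symm
    subst hk0
    have hdelta : deltaPoly 0 f 0 = 1 := by
      unfold deltaPoly
      rw [Finset.sum_range_one]
      have : (subM 0 f 0 0).det = 1 := Matrix.det_fin_zero
      rw [this, pow_zero, mul_one, Polynomial.C_1]
    rw [hdelta]
    have hfC : f = Polynomial.C (f.coeff 0) := Polynomial.eq_C_of_natDegree_eq_zero hdeg
    have hder : Polynomial.derivative f = 0 := by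
      rw [hfC]; simp
    rw [hder, EuclideanDomain.gcd_zero_right]
    have hunit : IsUnit f := by
      rw [hfC]
      exact Polynomial.isUnit_C.mpr (isUnit_iff_ne_zero.mpr (fun h0 => hf (by rw [hfC, h0, map_zero])))
    exact (associated_one_iff_isUnit.mpr hunit).symm
  · -- main case n ≥ 1
    have hlc : f.coeff n ≠ 0 := by
      rw [← hdeg]
      intro h0
      apply hf
      apply Polynomial.leadingCoeff_eq_zero.mp
      rw [Polynomial.leadingCoeff]
      exact h0
    set t : ℕ := Nat.findGreatest (fun j => discSeq n f j ≠ 0) n with htdef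
    have hD1 : discSeq n f 1 ≠ 0 := by
      rw [discSeq_one hn]
      positivity
    have ht1 : 1 ≤ t := Nat.le_findGreatest hn hD1
    have htle : t ≤ n := Nat.findGreatest_le n
    have htP : discSeq n f t ≠ 0 :=
      Nat.findGreatest_spec (P := fun j => discSeq n f j ≠ 0) hn hD1
    have ht2 : ∀ j, t < j → j ≤ n → discSeq n f j = 0 := by
      intro j hj hjn
      by_contra hne
      exact Nat.findGreatest_is_greatest (P := fun j => discSeq n f j ≠ 0) hj hjn hne
    have hcount := count_revised hdeg hn ht1 htle htP ht2 hlc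
    have hknt : k = n - t := by rw [← hk, hcount]
    have hkn : k < n := by omega
    have hnk : n - k = t := by omega
    have hA : discSeq n f (n - k) ≠ 0 := by rw [hnk]; exact htP
    have hB : ∀ j, n - k < j → j ≤ n → discSeq n f j = 0 := fun j h1 h2 =>
      ht2 j (by omega) h2
    -- degree and nonvanishing of deltaPoly
    have hcoeffΔ : (deltaPoly n f k).coeff k ≠ 0 := by
      rw [coeff_deltaPoly_self]; exact hA
    have hΔ0 : deltaPoly n f k ≠ 0 := fun h0 => hcoeffΔ (by rw [h0, Polynomial.coeff_zero])
    have hdegΔ : (deltaPoly n f k).natDegree = k :=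
      le_antisymm natDegree_deltaPoly_le (Polynomial.le_natDegree_of_ne_zero hcoeffΔ)
    -- gcd divides deltaPoly
    set h : Polynomial ℝ := EuclideanDomain.gcd f (Polynomial.derivative f) with hh
    have hdvd : h ∣ deltaPoly n f k := by
      obtain ⟨A, B, hAB⟩ := exists_comb hdeg hkn
      rw [hAB]
      exact dvd_add ((EuclideanDomain.gcd_dvd_left _ _).mul_right A)
        ((EuclideanDomain.gcd_dvd_right _ _).mul_right B)
    have hh0 : h ≠ 0 := fun h0 => hf (EuclideanDomain.gcd_eq_zero_iff.mp h0).1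
    set d : ℕ := h.natDegree with hd
    have hdk : d ≤ k := by
      have := Polynomial.natDegree_le_of_dvd hdvd hΔ0
      rwa [hdegΔ] at this
    have hdk' : ¬ d < k := by
      intro hlt
      have hne := discSeq_gcd_ne_zero hf hdeg hn
      rw [← hh, ← hd] at hne
      exact hne (hB (n - d) (by omega) (by omega))
    have hdke : d = k := by omega
    -- conclude : deltaPoly = h * unit
    obtain ⟨q, hq⟩ := hdvd
    have hq0 : q ≠ 0 := by
      intro h0
      rw [h0, mul_zero] at hq
      exact hΔ0 hq
    have hqdeg : q.natDegree = 0 := by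
      have := Polynomial.natDegree_mul hh0 hq0
      rw [← hq, hdegΔ] at this
      omega
    have hqC : q = Polynomial.C (q.coeff 0) := Polynomial.eq_C_of_natDegree_eq_zero hqdeg
    have hc0 : q.coeff 0 ≠ 0 := by
      intro h0
      rw [h0, map_zero] at hqC
      exact hq0 hqC
    have hqu : q * Polynomial.C (q.coeff 0)⁻¹ = 1 := by
      conv_lhs => rw [hqC]
      rw [← Polynomial.C_mul, Polynomial.coeff_C_zero, mul_inv_cancel₀ hc0, Polynomial.C_1]
    refine associated_of_dvd_dvd ?_ ⟨q, hq⟩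
    refine ⟨Polynomial.C (q.coeff 0)⁻¹, ?_⟩
    rw [hq, mul_assoc, hqu, mul_one]
end
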